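/- The group GL⁺(2,ℤ) (the Pin⁺ cover of GL(2,ℤ)), defined by the presentation ⟨û, ŝ, r̂ | ŝ⁸ = 1, ŝ² = û³, r̂² = 1, r̂ŝr̂ = ŝ⁻¹, r̂ûr̂ = û⁻¹⟩, is the amalgamated free product D₁₆ ∗_{D₈} D₂₄ of dihedral groups: the presented group on generators û, ŝ, r̂ with relators {ŝ⁸, ŝ²û⁻³, r̂², r̂ŝr̂ŝ, r̂ûr̂û} is isomorphic to the pushout of the two injective group homomorphisms DihedralGroup 4 → DihedralGroup 8 (sending the rotation r 1 to r 2 and the reflection sr 0 to sr 0) and DihedralGroup 4 → DihedralGroup 12 (sending r 1 to r 3 and sr 0 to sr 0), via an isomorphism carrying ŝ to the image of r 1 ∈ DihedralGroup 8, û to the image of r 1 ∈ DihedralGroup 12, and r̂ to the images of sr 0. -/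

import Mathlib

/-- The relators `{ŝ⁸, ŝ²û⁻³, r̂², r̂ŝr̂ŝ, r̂ûr̂û}`
(with `û = FreeGroup.of 0`, `ŝ = FreeGroup.of 1`, `r̂ = FreeGroup.of 2`). -/
def glPlusRels : Set (FreeGroup (Fin 3)) :=
  {(FreeGroup.of 1) ^ 8,
   (FreeGroup.of 1) ^ 2 * ((FreeGroup.of 0)⁻¹) ^ 3,
   (FreeGroup.of 2) ^ 2,
   FreeGroup.of 2 * FreeGroup.of 1 * FreeGroup.of 2 * FreeGroup.of 1,
   FreeGroup.of 2 * FreeGroup.of 0 * FreeGroup.of 2 * FreeGroup.of 0}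

/-- `GL⁺(2,ℤ)`, the Pin⁺ cover of `GL(2,ℤ)`, presented as
`⟨û, ŝ, r̂ | ŝ⁸ = 1, ŝ² = û³, r̂² = 1, r̂ŝr̂ = ŝ⁻¹, r̂ûr̂ = û⁻¹⟩`. -/
abbrev GLplus2Z := PresentedGroup glPlusRels

/-- The homomorphism of dihedral groups induced by an additive homomorphism of the
rotation subgroups: `r k ↦ r (c k)`, `sr k ↦ sr (c k)`. -/
def dihedralMap {m n : ℕ} (c : ZMod m →+ ZMod n) : DihedralGroup m →* DihedralGroup n :=
  MonoidHom.mk'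
    (fun x => match x with
      | DihedralGroup.r k => DihedralGroup.r (c k)
      | DihedralGroup.sr k => DihedralGroup.sr (c k))
    (by
      rintro (i | i) (j | j) <;>
        simp [DihedralGroup.r_mul_r, DihedralGroup.r_mul_sr, DihedralGroup.sr_mul_r,
          DihedralGroup.sr_mul_sr, map_add, map_sub])

/-- The homomorphism `ℤ/4 → ℤ/8` sending `1 ↦ 2`. -/
def f48 : ZMod 4 →+ ZMod 8 :=
  ZMod.lift 4 ⟨(Int.castAddHom (ZMod 8)).comp (AddMonoidHom.mulRight 2), by decide⟩

/-- The homomorphism `ℤ/4 → ℤ/12` sending `1 ↦ 3`. -/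
def f412 : ZMod 4 →+ ZMod 12 :=
  ZMod.lift 4 ⟨(Int.castAddHom (ZMod 12)).comp (AddMonoidHom.mulRight 3), by decide⟩

/-- The two vertex groups of the amalgam: the dihedral groups `D₁₆` and `D₂₄`
(of orders 16 and 24). -/
def Gfam : Bool → Type
  | true => DihedralGroup 8
  | false => DihedralGroup 12

instance : (b : Bool) → Group (Gfam b)
  | true => inferInstanceAs (Group (DihedralGroup 8))
  | false => inferInstanceAs (Group (DihedralGroup 12))

/-- The amalgamating homomorphisms `D₈ → D₁₆` (`r 1 ↦ r 2`, `sr 0 ↦ sr 0`) and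
`D₈ → D₂₄` (`r 1 ↦ r 3`, `sr 0 ↦ sr 0`). -/
def amalg : (b : Bool) → DihedralGroup 4 →* Gfam b
  | true => show DihedralGroup 4 →* DihedralGroup 8 from dihedralMap f48
  | false => show DihedralGroup 4 →* DihedralGroup 12 from dihedralMap f412


section DihedralLift
variable {n : ℕ} [NeZero n] {G : Type*} [Group G]

/-- lift to a group from dihedral data -/
def dihedralLift (a b : G) (ha : a ^ n = 1) (hb : b * b = 1) (hab : b * a * b = a⁻¹) :
    DihedralGroup n →* G :=
  MonoidHom.mk'
    (fun x => match x with
      | DihedralGroup.r k => a ^ k.val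
      | DihedralGroup.sr k => b * a ^ k.val)
    (by
      have hbinv : b⁻¹ = b := inv_eq_of_mul_eq_one_right hb
      have hconj : ∀ m : ℕ, b * a ^ m * b = (a ^ m)⁻¹ := by
        intro m
        have := conj_pow (i := m) (a := b) (b := a)
        rw [hbinv] at this
        rw [← this, hab, inv_pow]
      have hadd : ∀ i j : ZMod n, a ^ (i + j).val = a ^ i.val * a ^ j.val := by
        intro i j
        rw [ZMod.val_add, ← pow_eq_pow_mod _ ha, pow_add]
      have hsub : ∀ i j : ZMod n, a ^ (j - i).val = a ^ j.val * (a ^ i.val)⁻¹ := by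
        intro i j
        have := hadd (j - i) i
        rw [sub_add_cancel] at this
        rw [this, mul_inv_cancel_right]
      have hswap : ∀ m : ℕ, a ^ m * b = b * (a ^ m)⁻¹ := by
        intro m
        rw [← hconj m, ← mul_assoc, ← mul_assoc, hb, one_mul]
      have hcomm : ∀ i j : ℕ, (a ^ i)⁻¹ * a ^ j = a ^ j * (a ^ i)⁻¹ := fun i j =>
        ((Commute.pow_pow_self a i j).inv_left).eq
      rintro (i | i) (j | j)
      · show a ^ (i + j).val = a ^ i.val * a ^ j.val
        exact hadd i j
      · show b * a ^ (j - i).val = a ^ i.val * (b * a ^ j.val)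
        rw [hsub i j, ← mul_assoc (a ^ i.val), hswap, mul_assoc, hcomm, ← mul_assoc]
      · show b * a ^ (i + j).val = b * a ^ i.val * a ^ j.val
        rw [hadd, mul_assoc]
      · show a ^ (j - i).val = b * a ^ i.val * (b * a ^ j.val)
        rw [hsub, ← mul_assoc, hconj, hcomm])

@[simp] theorem dihedralLift_r (a b : G) (ha : a ^ n = 1) (hb : b * b = 1)
    (hab : b * a * b = a⁻¹) (k : ZMod n) :
    dihedralLift a b ha hb hab (DihedralGroup.r k) = a ^ k.val := rfl

@[simp] theorem dihedralLift_sr (a b : G) (ha : a ^ n = 1) (hb : b * b = 1)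
    (hab : b * a * b = a⁻¹) (k : ZMod n) :
    dihedralLift a b ha hb hab (DihedralGroup.sr k) = b * a ^ k.val := rfl

end DihedralLift

instance instDecEqGfam : (b : Bool) → DecidableEq (Gfam b)
  | true => inferInstanceAs (DecidableEq (DihedralGroup 8))
  | false => inferInstanceAs (DecidableEq (DihedralGroup 12))

/-- the images of the three generators in the pushout -/
def fgen : Fin 3 → Monoid.PushoutI amalg :=
  ![Monoid.PushoutI.of (φ := amalg) false (DihedralGroup.r 1),
    Monoid.PushoutI.of (φ := amalg) true (DihedralGroup.r 1),
    Monoid.PushoutI.of (φ := amalg) true (DihedralGroup.sr 0)]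

lemma key_r : Monoid.PushoutI.of (φ := amalg) true (DihedralGroup.r 2) =
    Monoid.PushoutI.of (φ := amalg) false (DihedralGroup.r 3) := by
  have h1 : amalg true (DihedralGroup.r 1) = DihedralGroup.r 2 := by
    exact (by decide : (dihedralMap f48 (DihedralGroup.r 1) : DihedralGroup 8) = DihedralGroup.r 2)
  have h2 : amalg false (DihedralGroup.r 1) = DihedralGroup.r 3 := by
    exact (by decide : (dihedralMap f412 (DihedralGroup.r 1) : DihedralGroup 12) = DihedralGroup.r 3)
  rw [← h1, ← h2, Monoid.PushoutI.of_apply_eq_base, Monoid.PushoutI.of_apply_eq_base]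

lemma key_sr : Monoid.PushoutI.of (φ := amalg) true (DihedralGroup.sr 0) =
    Monoid.PushoutI.of (φ := amalg) false (DihedralGroup.sr 0) := by
  have h1 : amalg true (DihedralGroup.sr 0) = DihedralGroup.sr 0 := by
    exact (by decide : (dihedralMap f48 (DihedralGroup.sr 0) : DihedralGroup 8) = DihedralGroup.sr 0)
  have h2 : amalg false (DihedralGroup.sr 0) = DihedralGroup.sr 0 := by
    exact (by decide : (dihedralMap f412 (DihedralGroup.sr 0) : DihedralGroup 12) = DihedralGroup.sr 0)
  rw [← h1, ← h2, Monoid.PushoutI.of_apply_eq_base, Monoid.PushoutI.of_apply_eq_base]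

lemma fgen_rels : ∀ rel ∈ glPlusRels, FreeGroup.lift fgen rel = 1 := by
  intro rel hrel
  have e0 : FreeGroup.lift fgen (FreeGroup.of (0 : Fin 3)) =
      Monoid.PushoutI.of (φ := amalg) false (DihedralGroup.r 1) := by
    rw [FreeGroup.lift_apply_of]; rfl
  have e1 : FreeGroup.lift fgen (FreeGroup.of (1 : Fin 3)) =
      Monoid.PushoutI.of (φ := amalg) true (DihedralGroup.r 1) := by
    rw [FreeGroup.lift_apply_of]; rfl
  have e2 : FreeGroup.lift fgen (FreeGroup.of (2 : Fin 3)) =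
      Monoid.PushoutI.of (φ := amalg) true (DihedralGroup.sr 0) := by
    rw [FreeGroup.lift_apply_of]; rfl
  rcases hrel with h | h | h | h | h <;> subst h
  · erw [map_pow, e1, ← map_pow]
    have : (DihedralGroup.r 1 : DihedralGroup 8) ^ 8 = 1 := by decide
    erw [this, map_one]
  · erw [map_mul, map_pow, map_pow, map_inv, e0, e1, ← map_pow, ← map_inv, ← map_pow]
    have h8 : (DihedralGroup.r 1 : DihedralGroup 8) ^ 2 = DihedralGroup.r 2 := by decide
    have h12 : ((DihedralGroup.r 1 : DihedralGroup 12)⁻¹) ^ 3 = DihedralGroup.r 9 := by decide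
    erw [h8, h12, key_r, ← map_mul]
    have : (DihedralGroup.r 3 * DihedralGroup.r 9 : DihedralGroup 12) = 1 := by decide
    erw [this, map_one]
  · erw [map_pow, e2, ← map_pow]
    have : (DihedralGroup.sr 0 : DihedralGroup 8) ^ 2 = 1 := by decide
    erw [this, map_one]
  · erw [map_mul, map_mul, map_mul, e1, e2, ← map_mul, ← map_mul, ← map_mul]
    have : (DihedralGroup.sr 0 * DihedralGroup.r 1 * DihedralGroup.sr 0 * DihedralGroup.r 1 :
        DihedralGroup 8) = 1 := by decide
    erw [this, map_one]
  · erw [map_mul, map_mul, map_mul, e0, e2, key_sr, ← map_mul, ← map_mul, ← map_mul]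
    have : (DihedralGroup.sr 0 * DihedralGroup.r 1 * DihedralGroup.sr 0 * DihedralGroup.r 1 :
        DihedralGroup 12) = 1 := by decide
    erw [this, map_one]

set_option maxHeartbeats 1000000 in
lemma amalg_true_inj : Function.Injective (amalg true) := by decide

set_option maxHeartbeats 1000000 in
lemma amalg_false_inj : Function.Injective (amalg false) := by decide

set_option maxHeartbeats 2000000 in
/-- `GL⁺(2,ℤ) = ⟨û, ŝ, r̂ | ŝ⁸ = 1, ŝ² = û³, r̂² = 1, r̂ŝr̂ = ŝ⁻¹, r̂ûr̂ = û⁻¹⟩ ≅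
D₁₆ ∗_{D₈} D₂₄`: the amalgamating maps are injective, send `r 1` to `r 2` and `r 3`
respectively and `sr 0` to `sr 0`, and the presented group is isomorphic to the pushout
via an isomorphism carrying `ŝ` to the image of `r 1 ∈ D₁₆`, `û` to the image of
`r 1 ∈ D₂₄`, and `r̂` to the images of `sr 0`. -/
theorem GLplus2Z_amalgam :
    Function.Injective (amalg true) ∧
    Function.Injective (amalg false) ∧
    amalg true (DihedralGroup.r 1) = DihedralGroup.r 2 ∧
    amalg true (DihedralGroup.sr 0) = DihedralGroup.sr 0 ∧
    amalg false (DihedralGroup.r 1) = DihedralGroup.r 3 ∧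
    amalg false (DihedralGroup.sr 0) = DihedralGroup.sr 0 ∧
    ∃ e : GLplus2Z ≃* Monoid.PushoutI amalg,
      e (PresentedGroup.of 1) =
        Monoid.PushoutI.of (φ := amalg) true (DihedralGroup.r 1) ∧
      e (PresentedGroup.of 0) =
        Monoid.PushoutI.of (φ := amalg) false (DihedralGroup.r 1) ∧
      e (PresentedGroup.of 2) =
        Monoid.PushoutI.of (φ := amalg) true (DihedralGroup.sr 0) ∧
      e (PresentedGroup.of 2) =
        Monoid.PushoutI.of (φ := amalg) false (DihedralGroup.sr 0) := by
  refine ⟨amalg_true_inj, amalg_false_inj,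
    (by decide : (dihedralMap f48 (DihedralGroup.r 1) : DihedralGroup 8) = DihedralGroup.r 2),
    (by decide : (dihedralMap f48 (DihedralGroup.sr 0) : DihedralGroup 8) = DihedralGroup.sr 0),
    (by decide : (dihedralMap f412 (DihedralGroup.r 1) : DihedralGroup 12) = DihedralGroup.r 3),
    (by decide : (dihedralMap f412 (DihedralGroup.sr 0) : DihedralGroup 12) = DihedralGroup.sr 0), ?_⟩
  set u : GLplus2Z := PresentedGroup.of 0 with hu_def
  set s : GLplus2Z := PresentedGroup.of 1 with hs_def
  set t : GLplus2Z := PresentedGroup.of 2 with ht_def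
  have hmk : ∀ rel ∈ glPlusRels, PresentedGroup.mk glPlusRels rel = 1 := fun rel hrel =>
    (QuotientGroup.eq_one_iff rel).mpr (Subgroup.subset_normalClosure hrel)
  have hs8 : s ^ 8 = 1 := by
    have := hmk _ (by simp [glPlusRels] : (FreeGroup.of 1 : FreeGroup (Fin 3)) ^ 8 ∈ glPlusRels)
    rwa [map_pow] at this
  have hsu : s ^ 2 = u ^ 3 := by
    have := hmk _ (by simp [glPlusRels] :
      ((FreeGroup.of 1) ^ 2 * ((FreeGroup.of 0)⁻¹) ^ 3 : FreeGroup (Fin 3)) ∈ glPlusRels)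
    rw [map_mul, map_pow, map_pow, map_inv, inv_pow] at this
    exact mul_inv_eq_one.mp this
  have ht2 : t * t = 1 := by
    have := hmk _ (by simp [glPlusRels] : (FreeGroup.of 2 : FreeGroup (Fin 3)) ^ 2 ∈ glPlusRels)
    rwa [map_pow, sq] at this
  have hts : t * s * t = s⁻¹ := by
    have := hmk _ (by simp [glPlusRels] :
      (FreeGroup.of 2 * FreeGroup.of 1 * FreeGroup.of 2 * FreeGroup.of 1 :
        FreeGroup (Fin 3)) ∈ glPlusRels)
    rw [map_mul, map_mul, map_mul] at this
    exact eq_inv_of_mul_eq_one_left this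
  have htu : t * u * t = u⁻¹ := by
    have := hmk _ (by simp [glPlusRels] :
      (FreeGroup.of 2 * FreeGroup.of 0 * FreeGroup.of 2 * FreeGroup.of 0 :
        FreeGroup (Fin 3)) ∈ glPlusRels)
    rw [map_mul, map_mul, map_mul] at this
    exact eq_inv_of_mul_eq_one_left this
  have hu12 : u ^ 12 = 1 := by
    have h : u ^ 12 = (u ^ 3) ^ 4 := by rw [← pow_mul]
    rw [h, ← hsu, ← pow_mul]
    exact hs8
  have hpow : ∀ m : ℕ, u ^ (3 * m) = s ^ (2 * m) := by
    intro m
    rw [pow_mul, pow_mul, hsu]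
  set gT : DihedralGroup 8 →* GLplus2Z := dihedralLift s t hs8 ht2 hts with hgT
  set gF : DihedralGroup 12 →* GLplus2Z := dihedralLift u t hu12 ht2 htu with hgF
  set fam : ∀ b : Bool, Gfam b →* GLplus2Z :=
    fun b => match b with
      | true => gT
      | false => gF with hfam
  have hval : ∀ k : ZMod 4, (f412 k).val = 3 * k.val ∧ (f48 k).val = 2 * k.val := by decide
  have hcompat : ∀ b : Bool, (fam b).comp (amalg b) = gT.comp (amalg true) := by
    intro b
    cases b
    · ext x
      rcases x with k | k
      · show u ^ (f412 k).val = s ^ (f48 k).val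
        rw [(hval k).1, (hval k).2]
        exact hpow k.val
      · show t * u ^ (f412 k).val = t * s ^ (f48 k).val
        rw [(hval k).1, (hval k).2, hpow k.val]
    · rfl
  set bwd : Monoid.PushoutI amalg →* GLplus2Z :=
    Monoid.PushoutI.lift fam (gT.comp (amalg true)) hcompat with hbwd
  set fwd : GLplus2Z →* Monoid.PushoutI amalg := PresentedGroup.toGroup fgen_rels with hfwd
  have fwd_u : fwd u = Monoid.PushoutI.of (φ := amalg) false (DihedralGroup.r 1) := by
    rw [hu_def, hfwd, PresentedGroup.toGroup.of]; rfl
  have fwd_s : fwd s = Monoid.PushoutI.of (φ := amalg) true (DihedralGroup.r 1) := by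
    rw [hs_def, hfwd, PresentedGroup.toGroup.of]; rfl
  have fwd_t : fwd t = Monoid.PushoutI.of (φ := amalg) true (DihedralGroup.sr 0) := by
    rw [ht_def, hfwd, PresentedGroup.toGroup.of]; rfl
  have bwd_T : ∀ x : DihedralGroup 8,
      bwd (Monoid.PushoutI.of (φ := amalg) true x) = gT x := by
    intro x
    erw [hbwd, Monoid.PushoutI.lift_of]
  have bwd_F : ∀ x : DihedralGroup 12,
      bwd (Monoid.PushoutI.of (φ := amalg) false x) = gF x := by
    intro x
    erw [hbwd, Monoid.PushoutI.lift_of]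
  have h1 : bwd.comp fwd = MonoidHom.id GLplus2Z := by
    apply PresentedGroup.ext
    intro x
    have hx := (by decide : ∀ y : Fin 3, y = 0 ∨ y = 1 ∨ y = 2) x
    rcases hx with rfl | rfl | rfl
    · rw [MonoidHom.comp_apply, MonoidHom.id_apply, ← hu_def, fwd_u, bwd_F, hgF]
      show u ^ (1 : ZMod 12).val = u
      rw [show (1 : ZMod 12).val = 1 from rfl, pow_one]
    · rw [MonoidHom.comp_apply, MonoidHom.id_apply, ← hs_def, fwd_s, bwd_T, hgT]
      show s ^ (1 : ZMod 8).val = s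
      rw [show (1 : ZMod 8).val = 1 from rfl, pow_one]
    · rw [MonoidHom.comp_apply, MonoidHom.id_apply, ← ht_def, fwd_t, bwd_T, hgT]
      show t * s ^ (0 : ZMod 8).val = t
      rw [show (0 : ZMod 8).val = 0 from rfl, pow_zero, mul_one]
  have h2 : fwd.comp bwd = MonoidHom.id (Monoid.PushoutI amalg) := by
    apply Monoid.PushoutI.hom_ext_nonempty
    intro b
    ext x
    simp only [MonoidHom.comp_apply, MonoidHom.id_apply]
    cases b
    · rcases x with k | k
      · erw [bwd_F, hgF, dihedralLift_r, map_pow, fwd_u, ← map_pow, DihedralGroup.r_one_pow,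
          ZMod.natCast_rightInverse k]
      · erw [bwd_F, hgF, dihedralLift_sr, map_mul, map_pow, fwd_t, fwd_u, key_sr, ← map_pow,
          DihedralGroup.r_one_pow, ZMod.natCast_rightInverse k, ← map_mul,
          DihedralGroup.sr_mul_r, zero_add]
    · rcases x with k | k
      · erw [bwd_T, hgT, dihedralLift_r, map_pow, fwd_s, ← map_pow, DihedralGroup.r_one_pow,
          ZMod.natCast_rightInverse k]
      · erw [bwd_T, hgT, dihedralLift_sr, map_mul, map_pow, fwd_t, fwd_s, ← map_pow,
          DihedralGroup.r_one_pow, ZMod.natCast_rightInverse k, ← map_mul,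
          DihedralGroup.sr_mul_r, zero_add]
  refine ⟨MonoidHom.toMulEquiv fwd bwd h1 h2, ?_, ?_, ?_, ?_⟩
  · exact fwd_s
  · exact fwd_u
  · exact fwd_t
  · rw [show (MonoidHom.toMulEquiv fwd bwd h1 h2) (PresentedGroup.of 2) = fwd t from rfl,
      fwd_t, key_sr]
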